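/- Let p be a prime, n ≥ 1 an integer, and 0 ≤ i ≤ n. Then the left coset space H_i\GL_n(ℤ) is finite and its cardinality equals g_p(n,i), i.e. |H_i\GL_n(ℤ)| = ∏_{a=1}^{i} (p^{n−a+1}−1)/(p^a−1). -/

import Mathlib

open Matrix

noncomputable section

/-- The diagonal entries (as rationals) of the matrix
`δ_{i,j} = diag(1_i, p·1_{j−i}, p²·1_{n−j})`. -/
def deltaEntry (p i j : ℕ) (a : ℕ) : ℚ :=
  if a < i then 1 else if a < j then (p : ℚ) else (p : ℚ) ^ 2

lemma deltaEntry_ne_zero {p : ℕ} (hp : p.Prime) (i j a : ℕ) :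
    deltaEntry p i j a ≠ 0 := by
  have : (p : ℚ) ≠ 0 := Nat.cast_ne_zero.mpr hp.ne_zero
  unfold deltaEntry
  split_ifs <;> simp [this]

/-- `δ_{i,j}` as a unit (invertible element) of the ring of rational `n × n` matrices. -/
def deltaU (p : ℕ) (hp : p.Prime) (n i j : ℕ) : (Matrix (Fin n) (Fin n) ℚ)ˣ where
  val := Matrix.diagonal fun a : Fin n => deltaEntry p i j (a : ℕ)
  inv := Matrix.diagonal fun a : Fin n => (deltaEntry p i j (a : ℕ))⁻¹
  val_inv := by
    rw [Matrix.diagonal_mul_diagonal]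
    have h : (fun a : Fin n => deltaEntry p i j (a : ℕ) * (deltaEntry p i j (a : ℕ))⁻¹)
        = fun _ => 1 := funext fun a => mul_inv_cancel₀ (deltaEntry_ne_zero hp i j a)
    rw [h, Matrix.diagonal_one]
  inv_val := by
    rw [Matrix.diagonal_mul_diagonal]
    have h : (fun a : Fin n => (deltaEntry p i j (a : ℕ))⁻¹ * deltaEntry p i j (a : ℕ))
        = fun _ => 1 := funext fun a => inv_mul_cancel₀ (deltaEntry_ne_zero hp i j a)
    rw [h, Matrix.diagonal_one]

/-- The canonical embedding `GL_n(ℤ) → GL_n(ℚ)`. -/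
def glMap (n : ℕ) : (Matrix (Fin n) (Fin n) ℤ)ˣ →* (Matrix (Fin n) (Fin n) ℚ)ˣ :=
  Units.map ((Int.castRingHom ℚ).mapMatrix).toMonoidHom

/-- The subgroup `H_{i,j} = δ_{i,j} GL_n(ℤ) δ_{i,j}⁻¹ ∩ GL_n(ℤ)` of `GL_n(ℤ)`
(identifying `GL_n(ℤ)` with its image in `GL_n(ℚ)`). -/
def Hij (p : ℕ) (hp : p.Prime) (n i j : ℕ) : Subgroup (Matrix (Fin n) (Fin n) ℤ)ˣ :=
  Subgroup.comap (glMap n)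
    (Subgroup.map (MulAut.conj (deltaU p hp n i j)).toMonoidHom (glMap n).range)

/-- The left coset space `H\G`, i.e. the set of right cosets `H·A`. -/
def cosetSpace {G : Type*} [Group G] (H : Subgroup G) : Type _ :=
  Quotient (QuotientGroup.rightRel H)

/-- `g_p(n,i) = ∏_{a=1}^{i} (p^{n−a+1}−1)/(p^a−1)` for `1 ≤ i ≤ n`, `1` for `i = 0`,
and `0` otherwise. -/
def gaussCoeff (p n i : ℕ) : ℚ :=
  if i = 0 then 1
  else if 1 ≤ i ∧ i ≤ n then
    ∏ a ∈ Finset.Icc 1 i, ((p : ℚ) ^ (n - a + 1) - 1) / ((p : ℚ) ^ a - 1)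
  else 0

-- ===== auxiliary development =====
noncomputable section

variable (p n i : ℕ)

/-- reduction mod p of integer matrices -/
def redMap (p n : ℕ) : Matrix (Fin n) (Fin n) ℤ →+* Matrix (Fin n) (Fin n) (ZMod p) :=
  (Int.castRingHom (ZMod p)).mapMatrix

instance matModAction (p n : ℕ) :
    MulAction (Matrix (Fin n) (Fin n) ℤ)ˣ (Submodule (ZMod p) (Fin n → ZMod p)) where
  smul g W := W.map (Matrix.mulVecLin (redMap p n g.val))
  one_smul W := by
    show W.map (Matrix.mulVecLin (redMap p n 1)) = W
    rw [_root_.map_one, Matrix.mulVecLin_one]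
    exact Submodule.map_id W
  mul_smul g h W := by
    show W.map (Matrix.mulVecLin (redMap p n (g.val * h.val))) = _
    rw [_root_.map_mul, Matrix.mulVecLin_mul]
    exact (Submodule.map_comp _ _ W)

lemma smul_submodule_def (g : (Matrix (Fin n) (Fin n) ℤ)ˣ)
    (W : Submodule (ZMod p) (Fin n → ZMod p)) :
    g • W = W.map (Matrix.mulVecLin (redMap p n g.val)) := rfl

/-- the standard subspace spanned by the first `i` coordinates -/
def Ei : Submodule (ZMod p) (Fin n → ZMod p) where
  carrier := {v | ∀ a : Fin n, i ≤ (a : ℕ) → v a = 0}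
  add_mem' := by intro u v hu hv a ha; simp [hu a ha, hv a ha]
  zero_mem' := by intro a _; rfl
  smul_mem' := by intro c v hv a ha; simp [hv a ha]

lemma mem_Ei (v : Fin n → ZMod p) : v ∈ Ei p n i ↔ ∀ a : Fin n, i ≤ (a : ℕ) → v a = 0 :=
  Iff.rfl

lemma single_smul_eq (a : Fin n) (c : ZMod p) :
    c • (Pi.single a 1 : Fin n → ZMod p) = Pi.single a c := by
  ext b
  by_cases hb : b = a
  · subst hb; simp
  · simp [Pi.single_eq_of_ne hb]

lemma Ei_eq_span :
    Ei p n i = Submodule.span (ZMod p)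
      (Set.range fun k : {a : Fin n // (a : ℕ) < i} =>
        (Pi.single k.1 1 : Fin n → ZMod p)) := by
  apply le_antisymm
  · intro v hv
    have hv' : v = ∑ a : Fin n, Pi.single a (v a) := (Finset.univ_sum_single v).symm
    rw [hv']
    apply Submodule.sum_mem
    intro a _
    by_cases ha : (a : ℕ) < i
    · rw [← single_smul_eq]
      exact Submodule.smul_mem _ _ (Submodule.subset_span ⟨⟨a, ha⟩, rfl⟩)
    · rw [mem_Ei] at hv
      rw [hv a (not_lt.mp ha)]
      simp
  · rw [Submodule.span_le]
    rintro _ ⟨⟨a, ha⟩, rfl⟩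
    intro b hb
    apply Pi.single_eq_of_ne
    intro hba
    subst hba
    omega

lemma linearIndependent_single_sub :
    LinearIndependent (ZMod p)
      (fun k : {a : Fin n // (a : ℕ) < i} => (Pi.single k.1 1 : Fin n → ZMod p)) := by
  have h := (Pi.basisFun (ZMod p) (Fin n)).linearIndependent
  have := h.comp (fun k : {a : Fin n // (a : ℕ) < i} => k.1) Subtype.val_injective
  convert this using 1
  funext k
  simp [Function.comp, Pi.basisFun_apply]

def subtypeLtEquiv (hi : i ≤ n) : {a : Fin n // (a : ℕ) < i} ≃ Fin i where
  toFun x := ⟨x.1, x.2⟩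
  invFun k := ⟨Fin.castLE hi k, k.2⟩
  left_inv x := by ext; rfl
  right_inv k := by ext; rfl

lemma finrank_Ei [Fact p.Prime] (hi : i ≤ n) :
    Module.finrank (ZMod p) (Ei p n i) = i := by
  rw [Ei_eq_span]
  rw [finrank_span_eq_card (linearIndependent_single_sub p n i)]
  rw [Fintype.card_congr (subtypeLtEquiv n i hi), Fintype.card_fin]


noncomputable section


-- ======== part B =========

lemma glMap_val (n : ℕ) (A : (Matrix (Fin n) (Fin n) ℤ)ˣ) (a b : Fin n) :
    ((glMap n A).val) a b = ((A.val a b : ℤ) : ℚ) := rfl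

lemma deltaEntry_eq (p i n : ℕ) (a : Fin n) :
    deltaEntry p i n (a : ℕ) = if (a : ℕ) < i then 1 else (p : ℚ) := by
  unfold deltaEntry
  rcases lt_or_ge (a : ℕ) i with h | h
  · simp [h]
  · simp [a.isLt, not_lt.mpr h]

lemma mem_Hij_iff {p : ℕ} (hp : p.Prime) (n i : ℕ) (X : (Matrix (Fin n) (Fin n) ℤ)ˣ) :
    X ∈ Hij p hp n i n ↔
      ∀ a b : Fin n, (b : ℕ) < i → i ≤ (a : ℕ) → (p : ℤ) ∣ X.val a b := by
  have hp0 : (p : ℚ) ≠ 0 := Nat.cast_ne_zero.mpr hp.ne_zero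
  set δ := deltaU p hp n i n with hδ
  have hmem : X ∈ Hij p hp n i n ↔ ∃ A : (Matrix (Fin n) (Fin n) ℤ)ˣ,
      δ * (glMap n A) * δ⁻¹ = glMap n X := by
    constructor
    · intro h
      rcases h with ⟨y, ⟨A, rfl⟩, hy⟩
      exact ⟨A, hy⟩
    · rintro ⟨A, hA⟩
      exact ⟨glMap n A, ⟨A, rfl⟩, hA⟩
  rw [hmem]
  constructor
  · rintro ⟨A, hA⟩ a b hb ha
    have hval : (glMap n A).val = δ.inv * (glMap n X).val * δ.val := by
      have := congrArg Units.val hA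
      simp only [Units.val_mul] at this
      rw [← this]
      have h1 : δ.inv * δ.val = 1 := δ.inv_val
      have h2 : (δ⁻¹ : _).val = δ.inv := rfl
      rw [h2]
      symm
      calc δ.inv * (δ.val * (glMap n A).val * δ.inv) * δ.val
          = (δ.inv * δ.val) * (glMap n A).val * (δ.inv * δ.val) := by
            noncomm_ring
        _ = (glMap n A).val := by rw [h1, one_mul, mul_one]
    have hentry := congrFun (congrFun hval a) b
    rw [glMap_val] at hentry
    have : δ.inv * (glMap n X).val * δ.val =
        Matrix.diagonal (fun a : Fin n => (deltaEntry p i n (a : ℕ))⁻¹) *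
          (glMap n X).val * Matrix.diagonal (fun a : Fin n => deltaEntry p i n (a : ℕ)) := rfl
    rw [this] at hentry
    have hde : (Matrix.diagonal (fun a : Fin n => (deltaEntry p i n (a : ℕ))⁻¹) *
          (glMap n X).val * Matrix.diagonal (fun a : Fin n => deltaEntry p i n (a : ℕ))) a b
        = (deltaEntry p i n (a : ℕ))⁻¹ * (glMap n X).val a b * deltaEntry p i n (b : ℕ) := by
      rw [Matrix.mul_diagonal, Matrix.diagonal_mul]
    rw [hde, glMap_val, deltaEntry_eq, deltaEntry_eq] at hentry
    rw [if_neg (not_lt.mpr ha), if_pos hb] at hentry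
    -- hentry : (A a b : ℚ) = (p)⁻¹ * (X a b) * 1
    refine ⟨A.val a b, ?_⟩
    have : ((X.val a b : ℤ) : ℚ) = ((p : ℤ) * A.val a b : ℤ) := by
      push_cast
      rw [hentry]
      field_simp
    exact_mod_cast this
  · intro hdvd
    set Aq : Matrix (Fin n) (Fin n) ℚ := δ.inv * (glMap n X).val * δ.val with hAq
    set A : Matrix (Fin n) (Fin n) ℤ := Matrix.of fun a b =>
      if (b : ℕ) < i ∧ i ≤ (a : ℕ) then X.val a b / p
      else if (a : ℕ) < i ∧ i ≤ (b : ℕ) then p * X.val a b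
      else X.val a b with hA
    have hcast : A.map (Int.cast : ℤ → ℚ) = Aq := by
      ext a b
      have hde : Aq a b
          = (deltaEntry p i n (a : ℕ))⁻¹ * ((X.val a b : ℤ) : ℚ) * deltaEntry p i n (b : ℕ) := by
        have hq : Aq = Matrix.diagonal (fun a : Fin n => (deltaEntry p i n (a : ℕ))⁻¹) *
            (glMap n X).val * Matrix.diagonal (fun a : Fin n => deltaEntry p i n (a : ℕ)) := rfl
        rw [hq, Matrix.mul_diagonal, Matrix.diagonal_mul, glMap_val]
      rw [hde, deltaEntry_eq, deltaEntry_eq]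
      rw [Matrix.map_apply, hA]
      simp only [Matrix.of_apply]
      rcases lt_or_ge (a : ℕ) i with ha | ha <;> rcases lt_or_ge (b : ℕ) i with hb | hb
      · rw [if_neg (by omega), if_neg (by omega), if_pos ha, if_pos hb]; ring
      · rw [if_neg (by omega), if_pos ⟨ha, hb⟩, if_pos ha, if_neg (not_lt.mpr hb)]
        push_cast; ring
      · rw [if_pos ⟨hb, ha⟩, if_neg (not_lt.mpr ha), if_pos hb]
        obtain ⟨c, hc⟩ := hdvd a b hb ha
        rw [hc, Int.mul_ediv_cancel_left _ (by exact_mod_cast hp.ne_zero)]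
        push_cast
        field_simp
      · rw [if_neg (by omega), if_neg (by omega), if_neg (not_lt.mpr ha),
          if_neg (not_lt.mpr hb)]
        push_cast
        field_simp
    have hdet : IsUnit A.det := by
      have h1 : ((A.det : ℤ) : ℚ) = Aq.det := by
        rw [← hcast]
        exact (RingHom.map_det (Int.castRingHom ℚ) A)
      have h2 : Aq.det = ((X.val.det : ℤ) : ℚ) := by
        rw [hAq]
        rw [Matrix.det_mul, Matrix.det_mul]
        have : δ.inv.det * (glMap n X).val.det * δ.val.det
            = (δ.inv * δ.val).det * (glMap n X).val.det := by
          rw [Matrix.det_mul]; ring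
        rw [this, δ.inv_val, Matrix.det_one, one_mul]
        exact (RingHom.map_det (Int.castRingHom ℚ) X.val).symm
      have : A.det = X.val.det := by exact_mod_cast h1.trans h2
      rw [this]
      exact (Matrix.isUnit_iff_isUnit_det X.val).mp ⟨X, rfl⟩
    have hAu : IsUnit A := (Matrix.isUnit_iff_isUnit_det A).mpr hdet
    refine ⟨hAu.unit, ?_⟩
    ext : 1
    simp only [Units.val_mul]
    have hval : (glMap n hAu.unit).val = A.map (Int.cast : ℤ → ℚ) := by
      show ((Int.castRingHom ℚ).mapMatrix hAu.unit.val : Matrix (Fin n) (Fin n) ℚ) = _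
      rw [IsUnit.unit_spec]
      rfl
    rw [hval, hcast, hAq]
    have h2 : (δ⁻¹ : _).val = δ.inv := rfl
    rw [h2]
    calc δ.val * (δ.inv * (glMap n X).val * δ.val) * δ.inv
        = (δ.val * δ.inv) * (glMap n X).val * (δ.val * δ.inv) := by noncomm_ring
      _ = (glMap n X).val := by rw [δ.val_inv, one_mul, mul_one]


-- ======== part C =========

lemma smul_Ei_le {p : ℕ} (n i : ℕ) {X : (Matrix (Fin n) (Fin n) ℤ)ˣ}
    (h : ∀ a b : Fin n, (b : ℕ) < i → i ≤ (a : ℕ) → (p : ℤ) ∣ X.val a b) :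
    X • Ei p n i ≤ Ei p n i := by
  rw [smul_submodule_def]
  rintro w ⟨v, hv, rfl⟩
  intro a ha
  have : (Matrix.mulVecLin (redMap p n X.val)) v a
      = ∑ b : Fin n, redMap p n X.val a b * v b := by
    simp [Matrix.mulVecLin_apply, Matrix.mulVec, dotProduct]
  rw [this]
  apply Finset.sum_eq_zero
  intro b _
  by_cases hb : (b : ℕ) < i
  · have h0 : redMap p n X.val a b = 0 := by
      have : redMap p n X.val a b = ((X.val a b : ℤ) : ZMod p) := rfl
      rw [this, ZMod.intCast_zmod_eq_zero_iff_dvd]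
      exact_mod_cast h a b hb ha
    rw [h0, zero_mul]
  · rw [(mem_Ei p n i v).mp hv b (not_lt.mp hb), mul_zero]

lemma dvd_of_smul_Ei_eq {p : ℕ} (n i : ℕ) {X : (Matrix (Fin n) (Fin n) ℤ)ˣ}
    (h : X • Ei p n i = Ei p n i) :
    ∀ a b : Fin n, (b : ℕ) < i → i ≤ (a : ℕ) → (p : ℤ) ∣ X.val a b := by
  intro a b hb ha
  have hsb : (Pi.single b 1 : Fin n → ZMod p) ∈ Ei p n i := by
    intro a' ha'
    exact Pi.single_eq_of_ne (by intro hc; subst hc; omega) 1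
  have himg : (Matrix.mulVecLin (redMap p n X.val)) (Pi.single b 1) ∈ Ei p n i := by
    rw [← h, smul_submodule_def]
    exact ⟨Pi.single b 1, hsb, rfl⟩
  have := (mem_Ei p n i _).mp himg a ha
  rw [Matrix.mulVecLin_apply, Matrix.mulVec_single_one] at this
  have h0 : ((X.val a b : ℤ) : ZMod p) = 0 := this
  rw [ZMod.intCast_zmod_eq_zero_iff_dvd] at h0
  exact_mod_cast h0

lemma Hij_eq_stabilizer {p : ℕ} (hp : p.Prime) (n i : ℕ) :
    Hij p hp n i n = MulAction.stabilizer (Matrix (Fin n) (Fin n) ℤ)ˣ (Ei p n i) := by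
  ext X
  rw [MulAction.mem_stabilizer_iff, mem_Hij_iff hp n i]
  constructor
  · intro h
    have h1 : X • Ei p n i ≤ Ei p n i := smul_Ei_le n i h
    have hinv : X⁻¹ ∈ Hij p hp n i n := by
      apply Subgroup.inv_mem
      rw [mem_Hij_iff hp n i]; exact h
    have h2 : X⁻¹ • Ei p n i ≤ Ei p n i :=
      smul_Ei_le n i ((mem_Hij_iff hp n i X⁻¹).mp hinv)
    refine le_antisymm h1 ?_
    have : X • (X⁻¹ • Ei p n i) ≤ X • Ei p n i := by
      rw [smul_submodule_def, smul_submodule_def]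
      exact Submodule.map_mono h2
    rwa [smul_inv_smul] at this
  · intro h
    exact dvd_of_smul_Ei_eq n i h


-- ======== part D =========

lemma redMap_mulVecLin_injective (p n : ℕ) (g : (Matrix (Fin n) (Fin n) ℤ)ˣ) :
    Function.Injective (Matrix.mulVecLin (redMap p n g.val)) := by
  intro v w h
  simp only [Matrix.mulVecLin_apply] at h
  have h2 := congrArg (fun u => redMap p n g.inv *ᵥ u) h
  simp only [Matrix.mulVec_mulVec] at h2
  rw [← _root_.map_mul, g.inv_val, _root_.map_one, Matrix.one_mulVec, Matrix.one_mulVec] at h2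
  exact h2

lemma finrank_smul (p n : ℕ) (g : (Matrix (Fin n) (Fin n) ℤ)ˣ)
    (W : Submodule (ZMod p) (Fin n → ZMod p)) :
    Module.finrank (ZMod p) ((g • W : Submodule (ZMod p) (Fin n → ZMod p)) : Type) =
      Module.finrank (ZMod p) W := by
  rw [smul_submodule_def]
  exact (LinearEquiv.finrank_eq
    (Submodule.equivMapOfInjective _ (redMap_mulVecLin_injective p n g) W)).symm

lemma exists_pivots (p n i : ℕ) [Fact p.Prime] (W : Submodule (ZMod p) (Fin n → ZMod p))
    (hW : Module.finrank (ZMod p) W = i) :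
    ∃ (S : Finset (Fin n)) (wv : S → (Fin n → ZMod p)),
      S.card = i ∧ (∀ r, wv r ∈ W) ∧
      (∀ r r' : S, wv r (r' : Fin n) = if (r' : Fin n) = (r : Fin n) then 1 else 0) ∧
      Submodule.span (ZMod p) (Set.range wv) = W := by
  classical
  let f : Fin n → Module.Dual (ZMod p) W := fun a => W.dualRestrict (LinearMap.proj a)
  have hproj : Submodule.span (ZMod p)
      (Set.range fun a : Fin n => (LinearMap.proj a : (Fin n → ZMod p) →ₗ[ZMod p] ZMod p)) = ⊤ := by
    have hb := (Pi.basisFun (ZMod p) (Fin n)).dualBasis.span_eq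
    have heq : ⇑(Pi.basisFun (ZMod p) (Fin n)).dualBasis
        = fun a : Fin n => (LinearMap.proj a : (Fin n → ZMod p) →ₗ[ZMod p] ZMod p) := by
      rw [Module.Basis.coe_dualBasis]
      funext a
      ext v
      simp [Module.Basis.coord_apply, Pi.basisFun_repr]
    rw [heq] at hb
    exact hb
  have hspan : Submodule.span (ZMod p) (Set.range f) = ⊤ := by
    have hr : Set.range f = ⇑W.dualRestrict ''
        Set.range (fun a : Fin n => (LinearMap.proj a : (Fin n → ZMod p) →ₗ[ZMod p] ZMod p)) := by
      rw [← Set.range_comp]; rfl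
    rw [hr, ← Submodule.map_span, hproj, Submodule.map_top,
      LinearMap.range_eq_top.mpr (Subspace.dualRestrict_surjective (W := W))]
  obtain ⟨bset, hbsub, hbspan, hbind⟩ := exists_linearIndependent (ZMod p) (Set.range f)
  rw [hspan] at hbspan
  have hbfin : bset.Finite := (Set.finite_range f).subset hbsub
  haveI := hbfin.fintype
  have hbcard : bset.toFinset.card = i := by
    have h1 := finrank_span_set_eq_card hbind
    rw [hbspan, finrank_top, Subspace.dual_finrank_eq, hW] at h1
    exact h1.symm
  have hselex : ∀ φ : bset, ∃ a : Fin n, f a = (φ : Module.Dual (ZMod p) W) :=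
    fun φ => hbsub φ.2
  choose sel hsel using hselex
  have hselinj : Function.Injective sel := by
    intro x y hxy
    apply Subtype.ext
    rw [← hsel x, ← hsel y, hxy]
  set S : Finset (Fin n) := Finset.univ.image sel with hS
  have hScard : S.card = i := by
    rw [hS, Finset.card_image_of_injective _ hselinj, Finset.card_univ, ← Set.toFinset_card,
      hbcard]
  have hker : ∀ x : W, (∀ r : Fin n, r ∈ S → (x : Fin n → ZMod p) r = 0) → x = 0 := by
    intro x hx
    refine (Module.forall_dual_apply_eq_zero_iff (ZMod p) x).mp ?_
    intro ψ
    have hψ : ψ ∈ Submodule.span (ZMod p) bset := by rw [hbspan]; trivial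
    refine Submodule.span_induction (fun φ hφ => ?_) (by simp) (fun u v _ _ hu hv => by
      simp [hu, hv]) (fun c u _ hu => by simp [hu]) hψ
    have h1 : f (sel ⟨φ, hφ⟩) = φ := hsel ⟨φ, hφ⟩
    have h2 : sel ⟨φ, hφ⟩ ∈ S := by
      rw [hS]; exact Finset.mem_image_of_mem sel (Finset.mem_univ _)
    rw [← h1]
    show W.dualRestrict (LinearMap.proj (sel ⟨φ, hφ⟩)) x = 0
    rw [Submodule.dualRestrict_apply]
    exact hx _ h2
  let P : W →ₗ[ZMod p] (S → ZMod p) :=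
    LinearMap.pi (fun r : S => (LinearMap.proj (r : Fin n)).comp W.subtype)
  have hPapp : ∀ (x : W) (r : S), P x r = (x : Fin n → ZMod p) (r : Fin n) := fun x r => rfl
  have hPinj : Function.Injective P := by
    intro x y hxy
    have h0 : x - y = 0 := by
      refine hker (x - y) (fun r hr => ?_)
      have hc := congrFun hxy (⟨r, hr⟩ : S)
      rw [hPapp, hPapp] at hc
      show ((x - y : W) : Fin n → ZMod p) r = 0
      rw [Submodule.coe_sub, Pi.sub_apply, hc, sub_self]
    rw [← sub_eq_zero]; exact h0
  have hfr : Module.finrank (ZMod p) W = Module.finrank (ZMod p) (S → ZMod p) := by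
    rw [hW, Module.finrank_fintype_fun_eq_card, Fintype.card_coe, hScard]
  let Peq := LinearMap.linearEquivOfInjective P hPinj hfr
  have hPeq : ∀ x : W, Peq x = P x := fun x => rfl
  let wv : S → (Fin n → ZMod p) := fun r => ((Peq.symm (Pi.single r 1)) : Fin n → ZMod p)
  refine ⟨S, wv, hScard, fun r => (Peq.symm (Pi.single r 1)).2, ?_, ?_⟩
  · intro r r'
    have h1 : P (Peq.symm (Pi.single r 1)) = Pi.single r 1 := by
      rw [← hPeq]; exact Peq.apply_symm_apply _
    have h2 := congrFun h1 r'
    rw [hPapp] at h2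
    show ((Peq.symm (Pi.single r 1) : W) : Fin n → ZMod p) (r' : Fin n) = _
    rw [h2, Pi.single_apply]
    by_cases h : r' = r
    · rw [if_pos h, if_pos (by rw [h])]
    · rw [if_neg h, if_neg (by intro hc; exact h (Subtype.ext hc))]
  · let bW : Module.Basis S (ZMod p) W := (Pi.basisFun (ZMod p) S).map Peq.symm
    have h2 : Submodule.map W.subtype (Submodule.span (ZMod p) (Set.range ⇑bW)) = W := by
      rw [Module.Basis.span_eq, Submodule.map_subtype_top]
    rw [Submodule.map_span, ← Set.range_comp] at h2
    have h3 : (⇑W.subtype ∘ ⇑bW) = wv := by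
      funext r
      show ((bW r : W) : Fin n → ZMod p) = wv r
      have : bW r = Peq.symm (Pi.single r 1) := by
        simp [bW, Module.Basis.map_apply]
      rw [this]
    rw [h3] at h2
    exact h2

lemma exists_smul_eq_W (p n i : ℕ) [Fact p.Prime] (hi : i ≤ n)
    (W : Submodule (ZMod p) (Fin n → ZMod p))
    (hW : Module.finrank (ZMod p) W = i) :
    ∃ gu : (Matrix (Fin n) (Fin n) ℤ)ˣ, gu • Ei p n i = W := by
  classical
  have hp1 : 1 < p := (Fact.out : p.Prime).one_lt
  haveI : Fact (1 < p) := ⟨hp1⟩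
  obtain ⟨S, wv, hScard, hwvW, hwvδ, hwvspan⟩ := exists_pivots p n i W hW
  have hSc : Sᶜ.card = n - i := by
    rw [Finset.card_compl, hScard]
    simp
  let σ := S.orderIsoOfFin hScard
  let τ := Sᶜ.orderIsoOfFin hSc
  have hτc : ∀ m, ((τ m : Fin n)) ∉ S := fun m => Finset.mem_compl.mp (τ m).2
  let rowF : Fin i ⊕ Fin (n - i) → Fin n :=
    Sum.elim (fun k => ((σ k : S) : Fin n)) fun m => ((τ m : (Sᶜ : Finset (Fin n))) : Fin n)
  have hrowinj : Function.Injective rowF := by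
    rintro (k | m) (k' | m') h <;> simp only [rowF, Sum.elim_inl, Sum.elim_inr] at h
    · exact congrArg Sum.inl (σ.injective (Subtype.ext h))
    · exact absurd (h ▸ ((σ k : S).2)) (hτc m')
    · exact absurd (h.symm ▸ ((σ k' : S).2)) (hτc m)
    · exact congrArg Sum.inr (τ.injective (Subtype.ext h))
  have hrowbij : Function.Bijective rowF :=
    (Fintype.bijective_iff_injective_and_card rowF).mpr ⟨hrowinj, by simp; omega⟩
  let rowE : Fin i ⊕ Fin (n - i) ≃ Fin n := Equiv.ofBijective rowF hrowbij
  let colE : Fin i ⊕ Fin (n - i) ≃ Fin n := finSumFinEquiv.trans (finCongr (by omega))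
  have hcol_inl : ∀ k : Fin i, ((colE (Sum.inl k)) : ℕ) = (k : ℕ) := by
    intro k; simp [colE]
  have hcol_inr : ∀ m : Fin (n - i), ((colE (Sum.inr m)) : ℕ) = i + (m : ℕ) := by
    intro m; simp [colE]
  let g : Matrix (Fin n) (Fin n) ℤ := Matrix.of fun a c =>
    if h : (c : ℕ) < i then ((wv (σ ⟨(c : ℕ), h⟩) a).val : ℤ)
    else if a = ((τ ⟨(c : ℕ) - i, by have := c.isLt; omega⟩ : (Sᶜ : Finset (Fin n))) : Fin n)
      then 1 else 0
  have hg1 : ∀ (a c : Fin n) (h : (c : ℕ) < i),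
      g a c = ((wv (σ ⟨(c : ℕ), h⟩) a).val : ℤ) := by
    intro a c h
    show dite _ _ _ = _
    rw [dif_pos h]
  have hg2 : ∀ (a c : Fin n) (h : ¬ (c : ℕ) < i) (hlt : (c : ℕ) - i < n - i),
      g a c = if a = ((τ ⟨(c : ℕ) - i, hlt⟩ : (Sᶜ : Finset (Fin n))) : Fin n) then 1 else 0 := by
    intro a c h hlt
    show dite _ _ _ = _
    rw [dif_neg h]
  let B : Matrix (Fin (n - i)) (Fin i) ℤ :=
    Matrix.of fun m k => g ((τ m : (Sᶜ : Finset (Fin n))) : Fin n) (colE (Sum.inl k))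
  have hsub : g.submatrix rowE colE = Matrix.fromBlocks 1 0 B 1 := by
    ext x y
    rcases x with k | m <;> rcases y with k' | m'
    · show g ((σ k : S) : Fin n) (colE (Sum.inl k')) = (1 : Matrix (Fin i) (Fin i) ℤ) k k'
      have hlt : ((colE (Sum.inl k')) : ℕ) < i := by rw [hcol_inl]; exact k'.isLt
      rw [hg1 _ _ hlt]
      have hfin : (⟨((colE (Sum.inl k')) : ℕ), hlt⟩ : Fin i) = k' := Fin.ext (hcol_inl k')
      rw [hfin]
      show ((wv (σ k') ((σ k : S) : Fin n)).val : ℤ) = _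
      rw [hwvδ (σ k') (σ k)]
      rw [Matrix.one_apply]
      by_cases h : k = k'
      · subst h
        rw [if_pos rfl, if_pos rfl, ZMod.val_one p, Nat.cast_one]
      · rw [if_neg (fun hc => h (σ.injective (Subtype.ext hc))), if_neg h,
          ZMod.val_zero, Nat.cast_zero]
    · show g ((σ k : S) : Fin n) (colE (Sum.inr m')) = (0 : Matrix (Fin i) (Fin (n - i)) ℤ) k m'
      have hge : ¬ ((colE (Sum.inr m')) : ℕ) < i := by rw [hcol_inr]; omega
      rw [hg2 _ _ hge (by rw [hcol_inr]; have := m'.isLt; omega)]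
      rw [if_neg]
      · rfl
      · intro hc
        have h1 : ((σ k : S) : Fin n) ∈ S := (σ k : S).2
        rw [hc] at h1
        exact hτc _ h1
    · rfl
    · show g ((τ m : (Sᶜ : Finset (Fin n))) : Fin n) (colE (Sum.inr m'))
          = (1 : Matrix (Fin (n - i)) (Fin (n - i)) ℤ) m m'
      have hge : ¬ ((colE (Sum.inr m')) : ℕ) < i := by rw [hcol_inr]; omega
      have hlt2 : ((colE (Sum.inr m')) : ℕ) - i < n - i := by
        rw [hcol_inr]; have := m'.isLt; omega
      rw [hg2 _ _ hge hlt2]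
      have hfin : (⟨((colE (Sum.inr m')) : ℕ) - i, hlt2⟩ : Fin (n - i)) = m' := by
        apply Fin.ext
        show ((colE (Sum.inr m')) : ℕ) - i = (m' : ℕ)
        rw [hcol_inr]; omega
      rw [hfin, Matrix.one_apply]
      by_cases h : m = m'
      · subst h; rw [if_pos rfl, if_pos rfl]
      · rw [if_neg (fun hc => h (τ.injective (Subtype.ext hc))), if_neg h]
  have hdet1 : (g.submatrix rowE colE).det = 1 := by
    rw [hsub, Matrix.det_fromBlocks_zero₁₂, Matrix.det_one, Matrix.det_one, mul_one]
  have hdetg : IsUnit g.det := by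
    let π : Equiv.Perm (Fin i ⊕ Fin (n - i)) := rowE.trans colE.symm
    have hperm : g.submatrix rowE colE = (g.submatrix colE colE).submatrix π id := by
      ext x y
      simp only [Matrix.submatrix_apply, id_eq, π, Equiv.trans_apply, Equiv.apply_symm_apply]
    have h1 := Matrix.det_permute π (g.submatrix ⇑colE ⇑colE)
    rw [← hperm, hdet1, Matrix.det_submatrix_equiv_self] at h1
    exact IsUnit.of_mul_eq_one ((Equiv.Perm.sign π : ℤˣ) : ℤ)
      (by rw [mul_comm]; exact h1.symm)
  have hgu : IsUnit g := (Matrix.isUnit_iff_isUnit_det g).mpr hdetg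
  refine ⟨hgu.unit, ?_⟩
  rw [smul_submodule_def, Ei_eq_span, Submodule.map_span]
  have hval : (hgu.unit : Matrix (Fin n) (Fin n) ℤ) = g := hgu.unit_spec
  have hcolval : ∀ (x : Fin n) (hx : (x : ℕ) < i),
      (Matrix.mulVecLin (redMap p n hgu.unit.val)) (Pi.single x 1) = wv (σ ⟨(x : ℕ), hx⟩) := by
    intro x hx
    rw [hval, Matrix.mulVecLin_apply, Matrix.mulVec_single_one]
    funext a
    show ((g a x : ℤ) : ZMod p) = _
    rw [hg1 a x hx]
    push_cast
    rw [ZMod.natCast_val, ZMod.cast_id]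
  have himage : (Matrix.mulVecLin (redMap p n hgu.unit.val)) ''
      (Set.range fun k : {a : Fin n // (a : ℕ) < i} => (Pi.single k.1 1 : Fin n → ZMod p))
      = Set.range wv := by
    ext v
    simp only [Set.mem_image, Set.mem_range]
    constructor
    · rintro ⟨_, ⟨k, rfl⟩, rfl⟩
      exact ⟨σ ⟨(k.1 : ℕ), k.2⟩, (hcolval k.1 k.2).symm⟩
    · rintro ⟨r, rfl⟩
      have hk : ((σ.symm r : Fin i) : ℕ) < i := (σ.symm r).isLt
      have hlt : ((σ.symm r : Fin i) : ℕ) < n := lt_of_lt_of_le hk hi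
      refine ⟨Pi.single (⟨(σ.symm r : Fin i), hlt⟩ : Fin n) 1,
        ⟨⟨⟨(σ.symm r : Fin i), hlt⟩, hk⟩, rfl⟩, ?_⟩
      rw [hcolval _ hk]
      congr 1
      have : (⟨((⟨(σ.symm r : Fin i), hlt⟩ : Fin n) : ℕ), hk⟩ : Fin i) = σ.symm r :=
        Fin.ext rfl
      rw [this, σ.apply_symm_apply r]
  rw [himage, hwvspan]

-- ======== part E =========


lemma orbit_Ei (p n i : ℕ) [Fact p.Prime] (hi : i ≤ n) :
    MulAction.orbit (Matrix (Fin n) (Fin n) ℤ)ˣ (Ei p n i)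
      = {W : Submodule (ZMod p) (Fin n → ZMod p) | Module.finrank (ZMod p) W = i} := by
  ext W
  simp only [MulAction.mem_orbit_iff, Set.mem_setOf_eq]
  constructor
  · rintro ⟨g, rfl⟩
    rw [finrank_smul]
    exact finrank_Ei p n i hi
  · intro hW
    exact exists_smul_eq_W p n i hi W hW

lemma grass_count (p n i : ℕ) [Fact p.Prime] (hi : i ≤ n) :
    Nat.card {W : Submodule (ZMod p) (Fin n → ZMod p) // Module.finrank (ZMod p) W = i}
      * ∏ a : Fin i, (p ^ i - p ^ (a : ℕ)) = ∏ a : Fin i, (p ^ n - p ^ (a : ℕ)) := by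
  classical
  haveI : Finite (Submodule (ZMod p) (Fin n → ZMod p)) :=
    Finite.of_injective _ SetLike.coe_injective
  set Grass := {W : Submodule (ZMod p) (Fin n → ZMod p) // Module.finrank (ZMod p) W = i}
    with hGrass
  -- the backward map from the sigma type
  let F : (Σ W : Grass, {s : Fin i → (W.1 : Type) // LinearIndependent (ZMod p) s}) →
      {s : Fin i → (Fin n → ZMod p) // LinearIndependent (ZMod p) s} :=
    fun x => ⟨fun k => ((x.2.1 k : Fin n → ZMod p)),
      x.2.2.map' x.1.1.subtype (Submodule.ker_subtype _)⟩
  have hspan : ∀ (x : (Σ W : Grass, {s : Fin i → (W.1 : Type) //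
      LinearIndependent (ZMod p) s})),
      Submodule.span (ZMod p) (Set.range fun k => ((x.2.1 k : Fin n → ZMod p))) = x.1.1 := by
    rintro ⟨⟨W, hW⟩, s, hs⟩
    have h1 : Submodule.span (ZMod p) (Set.range s) = ⊤ := by
      apply Submodule.eq_top_of_finrank_eq
      rw [finrank_span_eq_card hs, Fintype.card_fin, hW]
    have h2 : (Set.range fun k => ((s k : Fin n → ZMod p)))
        = W.subtype '' (Set.range s) := by
      rw [← Set.range_comp]; rfl
    rw [h2, ← Submodule.map_span, h1, Submodule.map_subtype_top]
  have hFbij : Function.Bijective F := by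
    constructor
    · rintro ⟨⟨W, hW⟩, s, hs⟩ ⟨⟨W', hW'⟩, s', hs'⟩ h
      have hval : (fun k => ((s k : Fin n → ZMod p))) = fun k => ((s' k : Fin n → ZMod p)) :=
        congrArg Subtype.val h
      have hWW : W = W' := by
        have h1 : Submodule.span (ZMod p) (Set.range fun k => ((s k : Fin n → ZMod p))) = W :=
          hspan ⟨⟨W, hW⟩, s, hs⟩
        have h2 : Submodule.span (ZMod p) (Set.range fun k => ((s' k : Fin n → ZMod p))) = W' :=
          hspan ⟨⟨W', hW'⟩, s', hs'⟩
        rw [← h1, ← h2, hval]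
      subst hWW
      have hss : s = s' := by
        funext k
        apply Subtype.ext
        exact congrFun hval k
      subst hss
      rfl
    · rintro ⟨s, hs⟩
      refine ⟨⟨⟨Submodule.span (ZMod p) (Set.range s), ?_⟩,
        fun k => ⟨s k, Submodule.subset_span (Set.mem_range_self k)⟩,
        ?_⟩, ?_⟩
      · rw [finrank_span_eq_card hs, Fintype.card_fin]
      · exact LinearIndependent.of_comp (Submodule.span (ZMod p) (Set.range s)).subtype hs
      · apply Subtype.ext
        rfl
  let e := Equiv.ofBijective F hFbij
  have hq : Fintype.card (ZMod p) = p := ZMod.card p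
  have hfr : Module.finrank (ZMod p) (Fin n → ZMod p) = n := by
    rw [Module.finrank_fintype_fun_eq_card, Fintype.card_fin]
  have hLHS : Nat.card {s : Fin i → (Fin n → ZMod p) // LinearIndependent (ZMod p) s}
      = ∏ a : Fin i, (p ^ n - p ^ (a : ℕ)) := by
    rw [card_linearIndependent (by rw [hfr]; exact hi)]
    simp only [hq, hfr]
  have hfib : ∀ W : Grass,
      Nat.card {s : Fin i → (W.1 : Type) // LinearIndependent (ZMod p) s}
        = ∏ a : Fin i, (p ^ i - p ^ (a : ℕ)) := by
    intro W
    rw [card_linearIndependent (by rw [W.2])]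
    simp only [hq, W.2]
  haveI : Fintype Grass := Fintype.ofFinite Grass
  haveI instF : ∀ W : Grass, Fintype {s : Fin i → (W.1 : Type) // LinearIndependent (ZMod p) s} :=
    fun W => Fintype.ofFinite _
  have hsig : Nat.card (Σ W : Grass, {s : Fin i → (W.1 : Type) // LinearIndependent (ZMod p) s})
      = Nat.card Grass * ∏ a : Fin i, (p ^ i - p ^ (a : ℕ)) := by
    rw [Nat.card_eq_fintype_card, Fintype.card_sigma]
    have hc : ∀ W : Grass,
        Fintype.card {s : Fin i → (W.1 : Type) // LinearIndependent (ZMod p) s}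
          = ∏ a : Fin i, (p ^ i - p ^ (a : ℕ)) :=
      fun W => by rw [← Nat.card_eq_fintype_card, hfib W]
    rw [Finset.sum_congr rfl fun W _ => hc W, Finset.sum_const, Finset.card_univ, smul_eq_mul,
      Nat.card_eq_fintype_card]
  rw [← hLHS, ← Nat.card_congr e, hsig]

lemma gauss_eval (p n i : ℕ) (hp : 1 < p) (hi : i ≤ n) (N : ℕ)
    (h : N * ∏ a : Fin i, (p ^ i - p ^ (a : ℕ)) = ∏ a : Fin i, (p ^ n - p ^ (a : ℕ))) :
    (N : ℚ) = gaussCoeff p n i := by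
  have hq1 : (1 : ℚ) < (p : ℚ) := by exact_mod_cast hp
  have hq0 : (0 : ℚ) < (p : ℚ) := lt_trans one_pos hq1
  -- cast the hypothesis to ℚ
  have hcast : (N : ℚ) * ∏ a : Fin i, ((p : ℚ) ^ i - (p : ℚ) ^ (a : ℕ))
      = ∏ a : Fin i, ((p : ℚ) ^ n - (p : ℚ) ^ (a : ℕ)) := by
    have h1 : ((N * ∏ a : Fin i, (p ^ i - p ^ (a : ℕ)) : ℕ) : ℚ)
        = ((∏ a : Fin i, (p ^ n - p ^ (a : ℕ)) : ℕ) : ℚ) := congrArg (Nat.cast : ℕ → ℚ) h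
    rw [Nat.cast_mul, Nat.cast_prod, Nat.cast_prod] at h1
    have h2 : ∀ a : Fin i, ((p ^ i - p ^ (a : ℕ) : ℕ) : ℚ)
        = (p : ℚ) ^ i - (p : ℚ) ^ (a : ℕ) := by
      intro a
      rw [Nat.cast_sub (Nat.pow_le_pow_right hp.le a.isLt.le)]
      push_cast; ring
    have h3 : ∀ a : Fin i, ((p ^ n - p ^ (a : ℕ) : ℕ) : ℚ)
        = (p : ℚ) ^ n - (p : ℚ) ^ (a : ℕ) := by
      intro a
      rw [Nat.cast_sub (Nat.pow_le_pow_right hp.le (le_trans a.isLt.le hi))]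
      push_cast; ring
    rw [Finset.prod_congr rfl (fun a _ => h2 a), Finset.prod_congr rfl (fun a _ => h3 a)] at h1
    exact h1
  -- factor out powers of p
  have hfactD : ∀ a : Fin i, (p : ℚ) ^ i - (p : ℚ) ^ (a : ℕ)
      = (p : ℚ) ^ (a : ℕ) * ((p : ℚ) ^ (i - (a : ℕ)) - 1) := by
    intro a
    rw [mul_sub, mul_one, ← pow_add]
    congr 2
    omega
  have hfactN : ∀ a : Fin i, (p : ℚ) ^ n - (p : ℚ) ^ (a : ℕ)
      = (p : ℚ) ^ (a : ℕ) * ((p : ℚ) ^ (n - (a : ℕ)) - 1) := by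
    intro a
    rw [mul_sub, mul_one, ← pow_add]
    congr 2
    have := a.isLt
    omega
  have hreD : ∏ a ∈ Finset.range i, ((p : ℚ) ^ (i - a) - 1)
      = ∏ a ∈ Finset.Icc 1 i, ((p : ℚ) ^ a - 1) := by
    apply Finset.prod_nbij' (fun a => i - a) (fun a => i - a)
    · intro a ha
      simp only [Finset.mem_range] at ha
      simp only [Finset.mem_Icc]
      omega
    · intro a ha
      simp only [Finset.mem_Icc] at ha
      simp only [Finset.mem_range]
      omega
    · intro a ha
      simp only [Finset.mem_range] at ha
      omega
    · intro a ha
      simp only [Finset.mem_Icc] at ha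
      omega
    · intro a ha
      rfl
  have hreN : ∏ a ∈ Finset.range i, ((p : ℚ) ^ (n - a) - 1)
      = ∏ a ∈ Finset.Icc 1 i, ((p : ℚ) ^ (n - a + 1) - 1) := by
    apply Finset.prod_nbij' (fun a => a + 1) (fun a => a - 1)
    · intro a ha
      simp only [Finset.mem_range] at ha
      simp only [Finset.mem_Icc]
      omega
    · intro a ha
      simp only [Finset.mem_Icc] at ha
      simp only [Finset.mem_range]
      omega
    · intro a ha
      omega
    · intro a ha
      simp only [Finset.mem_Icc] at ha
      omega
    · intro a ha
      simp only [Finset.mem_range] at ha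
      congr 2
      omega
  have hPne : (∏ a : Fin i, (p : ℚ) ^ (a : ℕ)) ≠ 0 :=
    Finset.prod_ne_zero_iff.mpr (fun a _ => pow_ne_zero _ (ne_of_gt hq0))
  have hTdne : (∏ a ∈ Finset.Icc 1 i, ((p : ℚ) ^ a - 1)) ≠ 0 := by
    apply Finset.prod_ne_zero_iff.mpr
    intro a ha
    simp only [Finset.mem_Icc] at ha
    have : (1 : ℚ) < (p : ℚ) ^ a := by
      calc (1 : ℚ) < (p : ℚ) ^ 1 := by simpa using hq1
      _ ≤ (p : ℚ) ^ a := pow_le_pow_right₀ hq1.le ha.1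
    linarith
  have hD : ∏ a : Fin i, ((p : ℚ) ^ i - (p : ℚ) ^ (a : ℕ))
      = (∏ a : Fin i, (p : ℚ) ^ (a : ℕ)) * ∏ a ∈ Finset.Icc 1 i, ((p : ℚ) ^ a - 1) := by
    rw [Finset.prod_congr rfl (fun a _ => hfactD a), Finset.prod_mul_distrib]
    congr 1
    rw [Fin.prod_univ_eq_prod_range (fun a => (p : ℚ) ^ (i - a) - 1)]
    exact hreD
  have hN : ∏ a : Fin i, ((p : ℚ) ^ n - (p : ℚ) ^ (a : ℕ))
      = (∏ a : Fin i, (p : ℚ) ^ (a : ℕ))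
        * ∏ a ∈ Finset.Icc 1 i, ((p : ℚ) ^ (n - a + 1) - 1) := by
    rw [Finset.prod_congr rfl (fun a _ => hfactN a), Finset.prod_mul_distrib]
    congr 1
    rw [Fin.prod_univ_eq_prod_range (fun a => (p : ℚ) ^ (n - a) - 1)]
    exact hreN
  rw [hD, hN] at hcast
  have hNval : (N : ℚ) = (∏ a ∈ Finset.Icc 1 i, ((p : ℚ) ^ (n - a + 1) - 1))
      / (∏ a ∈ Finset.Icc 1 i, ((p : ℚ) ^ a - 1)) := by
    rw [eq_div_iff hTdne]
    apply mul_left_cancel₀ hPne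
    calc (∏ a : Fin i, (p : ℚ) ^ (a : ℕ))
          * ((N : ℚ) * ∏ a ∈ Finset.Icc 1 i, ((p : ℚ) ^ a - 1))
        = (N : ℚ) * ((∏ a : Fin i, (p : ℚ) ^ (a : ℕ))
            * ∏ a ∈ Finset.Icc 1 i, ((p : ℚ) ^ a - 1)) := by ring
      _ = (∏ a : Fin i, (p : ℚ) ^ (a : ℕ))
          * ∏ a ∈ Finset.Icc 1 i, ((p : ℚ) ^ (n - a + 1) - 1) := hcast
  rw [hNval]
  unfold gaussCoeff
  rcases Nat.eq_zero_or_pos i with hi0 | hi0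
  · subst hi0
    simp
  · rw [if_neg (by omega), if_pos ⟨hi0, hi⟩]
    rw [Finset.prod_div_distrib]

-- ======== final =========


/-- for a prime `p`, `n ≥ 1` and `0 ≤ i ≤ n`, the left coset space
`H_i\GL_n(ℤ)` (with `H_i = H_{i,n}`, i.e. `δ_i = diag(1_i, p·1_{n−i})`) is finite and its
cardinality equals `g_p(n,i)`. -/
theorem statement0 (p n i : ℕ) (hp : p.Prime) (hn : 1 ≤ n) (hi : i ≤ n) :
    Finite (cosetSpace (Hij p hp n i n)) ∧
      (Nat.card (cosetSpace (Hij p hp n i n)) : ℚ) = gaussCoeff p n i := by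
  haveI : Fact p.Prime := ⟨hp⟩
  have hidx : Nat.card (cosetSpace (Hij p hp n i n)) = (Hij p hp n i n).index :=
    Nat.card_congr (QuotientGroup.quotientRightRelEquivQuotientLeftRel _)
  have horb : (Hij p hp n i n).index
      = Nat.card {W : Submodule (ZMod p) (Fin n → ZMod p) //
          Module.finrank (ZMod p) W = i} := by
    rw [Hij_eq_stabilizer hp n i, MulAction.index_stabilizer, orbit_Ei p n i hi,
      ← Nat.card_coe_set_eq]
    rfl
  have hcount := grass_count p n i hi
  have hprod_pos : 0 < ∏ a : Fin i, (p ^ n - p ^ (a : ℕ)) := by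
    apply Finset.prod_pos
    intro a _
    have h1 : p ^ (a : ℕ) < p ^ n :=
      Nat.pow_lt_pow_right hp.one_lt (lt_of_lt_of_le a.isLt hi)
    omega
  have hN0 : Nat.card {W : Submodule (ZMod p) (Fin n → ZMod p) //
      Module.finrank (ZMod p) W = i} ≠ 0 := by
    intro h0
    rw [h0, zero_mul] at hcount
    omega
  constructor
  · have hne : Nat.card (cosetSpace (Hij p hp n i n)) ≠ 0 := by
      rw [hidx, horb]; exact hN0
    exact (Nat.card_ne_zero.mp hne).2
  · rw [hidx, horb]
    exact gauss_eval p n i hp.one_lt hi _ hcount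

end
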